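/- arXiv:1508.01978 — 2 statements merged into one kernel-verified Lean document; each statement's English description precedes it below -/
import Mathlib

section
/- The relative entropy of coherence of a density operator ρ on reference basis Ξ equals the minimum relative entropy from ρ to the set of states diagonal in Ξ, and this equals S(Λ^{Ξ}(ρ)) − S(ρ), where S denotes the von Neumann entropy. -/
open Matrix Kronecker BigOperators Finset
open scoped Classical ComplexOrder

noncomputable section

variable {m n q : Type*} [Fintype m] [DecidableEq m] [Fintype n] [DecidableEq n]
  [Fintype q] [DecidableEq q]

/-- the projector `|v⟩⟨v|` onto a vector `v`. -/
def proj (v : n → ℂ) : Matrix n n ℂ := vecMulVec v (star v)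

/-- an orthonormal basis of `ℂ^n`, given as a family of vectors. -/
def ONB (b : n → n → ℂ) : Prop := ∀ i j, star (b i) ⬝ᵥ b j = if i = j then (1 : ℂ) else 0

/-- the standard (computational) basis. -/
def stdB : n → n → ℂ := fun i j => if i = j then 1 else 0

/-- matrix logarithm of a Hermitian matrix, via the spectral decomposition
(with the convention `log 0 = 0`); junk value `0` on non-Hermitian matrices. -/
def mlog (A : Matrix n n ℂ) : Matrix n n ℂ :=
  if hA : A.IsHermitian then
    (hA.eigenvectorUnitary : Matrix n n ℂ) *
      diagonal (fun i => (Real.log (hA.eigenvalues i) : ℂ)) *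
      star (hA.eigenvectorUnitary : Matrix n n ℂ)
  else 0

/-- von Neumann entropy `S(ρ) = -Tr ρ log ρ` (in nats). -/
def vN (ρ : Matrix n n ℂ) : ℝ := -(ρ * mlog ρ).trace.re

/-- quantum relative entropy `S(ρ‖σ) = Tr(ρ log ρ - ρ log σ)`, which is `+∞`
unless the support of `ρ` is contained in the support of `σ`. -/
def relEnt (ρ σ : Matrix n n ℂ) : EReal :=
  if ∀ v, σ *ᵥ v = 0 → ρ *ᵥ v = 0
  then (((ρ * (mlog ρ - mlog σ)).trace.re : ℝ) : EReal)
  else ⊤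

/-- a density matrix. -/
def IsDensity (ρ : Matrix n n ℂ) : Prop := ρ.PosSemidef ∧ ρ.trace = 1

/-- the dephasing (pinching) channel in the basis `b`. -/
def dephase (b : n → n → ℂ) (ρ : Matrix n n ℂ) : Matrix n n ℂ :=
  ∑ i, proj (b i) * ρ * proj (b i)

/-- partial trace over the first factor. -/
def ptraceA (ρ : Matrix (m × n) (m × n) ℂ) : Matrix n n ℂ :=
  Matrix.of fun j j' => ∑ i, ρ (i, j) (i, j')

/-- partial trace over the second factor. -/
def ptraceB (ρ : Matrix (m × n) (m × n) ℂ) : Matrix m m ℂ :=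
  Matrix.of fun i i' => ∑ j, ρ (i, j) (i', j)

/-- the (unnormalized) steered state `⟨ξ|ρ|ξ⟩` on Bob's side, when Alice
obtains the outcome `ξ`. -/
def steer (ξ : m → ℂ) (ρ : Matrix (m × n) (m × n) ℂ) : Matrix n n ℂ :=
  Matrix.of fun j j' => ∑ i, ∑ i', star (ξ i) * ρ (i, j) (i', j') * ξ i'

/-- the probability `p^ξ = Tr[ρ (|ξ⟩⟨ξ| ⊗ I)]` of Alice's outcome `ξ`. -/
def sprob (ξ : m → ℂ) (ρ : Matrix (m × n) (m × n) ℂ) : ℝ := (steer ξ ρ).trace.re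

/-- the channel `I_A ⊗ Λ^{E_B}`: dephasing of the `B` factor in basis `b`. -/
def dephaseB (b : n → n → ℂ) (ρ : Matrix (m × n) (m × n) ℂ) : Matrix (m × n) (m × n) ℂ :=
  ∑ k, ((1 : Matrix m m ℂ) ⊗ₖ proj (b k)) * ρ * ((1 : Matrix m m ℂ) ⊗ₖ proj (b k))

/-- `b` is an orthonormal eigenbasis of `A`. -/
def IsEigenbasis (A : Matrix n n ℂ) (b : n → n → ℂ) : Prop :=
  ONB b ∧ ∀ k, ∃ μ : ℝ, A *ᵥ b k = (μ : ℂ) • b k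

/-- the `l₁`-norm of coherence of `τ` in the basis `b`. -/
def l1coh (b : n → n → ℂ) (τ : Matrix n n ℂ) : ℝ :=
  ∑ i, ∑ j, if i = j then 0 else ‖star (b i) ⬝ᵥ (τ *ᵥ b j)‖

/-- the trace norm `‖A‖₁ = Tr √(AᴴA)`. -/
def traceNorm (A : Matrix n n ℂ) : ℝ :=
  ∑ i, Real.sqrt ((Matrix.isHermitian_conjTranspose_mul_self A).eigenvalues i)

/-- the Fourier basis vectors `|ξ_k⟩ = d^{-1/2} Σ_j e^{-2πikj/d}|j⟩`. -/
def fbasis (d : ℕ) (k : Fin d) : Fin d → ℂ := fun j =>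
  (1 / Real.sqrt d) * Complex.exp (-(2 * Real.pi * Complex.I * (k : ℕ) * (j : ℕ)) / d)

section Aux
variable {n : Type*} [Fintype n] [DecidableEq n]

lemma proj_mul_proj' {b : n → n → ℂ} (hb : ONB b) (i j : n) :
    proj (b i) * proj (b j) = if i = j then proj (b i) else 0 := by
  have h := hb i j
  ext x y
  have key : (proj (b i) * proj (b j)) x y
      = (star (b i) ⬝ᵥ b j) * (b i x * star (b j y)) := by
    simp only [Matrix.mul_apply, proj, vecMulVec_apply, Pi.star_apply, dotProduct,
      Finset.sum_mul]
    exact Finset.sum_congr rfl fun s _ => by ring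
  rw [key, h]
  split_ifs with hij
  · subst hij; simp [proj, vecMulVec_apply]
  · simp

lemma sum_proj {b : n → n → ℂ} (hb : ONB b) : ∑ i, proj (b i) = 1 := by
  set U : Matrix n n ℂ := Matrix.of fun x i => b i x with hU
  have h : Uᴴ * U = 1 := by
    ext i j
    simpa [Matrix.mul_apply, Matrix.conjTranspose_apply, dotProduct, hU,
      Matrix.one_apply] using hb i j
  have h2 : U * Uᴴ = 1 := mul_eq_one_comm.mp h
  ext x y
  rw [Matrix.sum_apply]
  calc ∑ i, proj (b i) x y = (U * Uᴴ) x y := by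
        simp [Matrix.mul_apply, proj, vecMulVec_apply, Matrix.conjTranspose_apply, hU]
    _ = (1 : Matrix n n ℂ) x y := by rw [h2]

lemma trace_mul_proj (M : Matrix n n ℂ) (v : n → ℂ) :
    (M * proj v).trace = star v ⬝ᵥ M *ᵥ v := by
  simp only [Matrix.trace, Matrix.diag, Matrix.mul_apply, proj, vecMulVec_apply, Pi.star_apply,
    dotProduct, mulVec, Finset.mul_sum]
  refine Finset.sum_congr rfl fun s _ => Finset.sum_congr rfl fun t _ => by ring

lemma dephase_eq {b : n → n → ℂ} (ρ : Matrix n n ℂ) :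
    dephase b ρ = ∑ i, (star (b i) ⬝ᵥ ρ *ᵥ b i) • proj (b i) := by
  unfold dephase
  refine Finset.sum_congr rfl fun i _ => ?_
  ext x y
  simp only [Matrix.mul_apply, proj, vecMulVec_apply, Pi.star_apply, Matrix.smul_apply,
    dotProduct, mulVec, smul_eq_mul, Finset.sum_mul, Finset.mul_sum]
  rw [Finset.sum_comm]
  refine Finset.sum_congr rfl fun s _ => Finset.sum_congr rfl fun t _ => by ring

lemma herm_coeff_real {M : Matrix n n ℂ} (hM : M.IsHermitian) (v : n → ℂ) :
    (((star v ⬝ᵥ M *ᵥ v).re : ℝ) : ℂ) = star v ⬝ᵥ M *ᵥ v := by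
  rw [← Complex.conj_eq_iff_re]
  simp only [dotProduct, mulVec, Pi.star_apply, Complex.star_def, map_sum, _root_.map_mul,
    Complex.conj_conj]
  simp only [Finset.mul_sum]
  rw [Finset.sum_comm]
  refine Finset.sum_congr rfl fun s _ => Finset.sum_congr rfl fun t _ => ?_
  rw [← hM.apply s t, Complex.star_def]
  ring

end Aux
section Aux2
variable {n : Type*} [Fintype n] [DecidableEq n]

/-- conjugation by a unitary, as an algebra homomorphism. -/
def conjAH (V : Matrix n n ℂ) (h1 : V * Vᴴ = 1) (h2 : Vᴴ * V = 1) :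
    Matrix n n ℂ →ₐ[ℂ] Matrix n n ℂ where
  toFun X := V * X * Vᴴ
  map_one' := by show V * 1 * Vᴴ = 1; rw [mul_one, h1]
  map_mul' X Y := by
    show V * (X * Y) * Vᴴ = V * X * Vᴴ * (V * Y * Vᴴ)
    simp only [mul_assoc]
    rw [← mul_assoc Vᴴ V, h2, one_mul]
  map_zero' := by show V * 0 * Vᴴ = 0; simp
  map_add' X Y := by
    show V * (X + Y) * Vᴴ = V * X * Vᴴ + V * Y * Vᴴ
    rw [mul_add, add_mul]
  commutes' r := by
    show V * algebraMap ℂ (Matrix n n ℂ) r * Vᴴ = algebraMap ℂ (Matrix n n ℂ) r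
    simp only [Algebra.algebraMap_eq_smul_one, Matrix.mul_smul, Matrix.smul_mul, mul_one, h1]

lemma aeval_conj (V : Matrix n n ℂ) (h1 : V * Vᴴ = 1) (h2 : Vᴴ * V = 1)
    (X : Matrix n n ℂ) (q : Polynomial ℂ) :
    Polynomial.aeval (V * X * Vᴴ) q = V * Polynomial.aeval X q * Vᴴ :=
  Polynomial.aeval_algHom_apply (conjAH V h1 h2) X q

lemma aeval_diagonal' (d : n → ℂ) (q : Polynomial ℂ) :
    Polynomial.aeval (Matrix.diagonal d) q = Matrix.diagonal fun i => q.eval (d i) := by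
  have h := Polynomial.aeval_algHom_apply (Matrix.diagonalAlgHom (n := n) (α := ℂ) ℂ) d q
  simp only [Matrix.diagonalAlgHom_apply] at h
  have h3 : (Polynomial.aeval d) q = fun i => q.eval (d i) := by
    funext i
    have h2 := Polynomial.aeval_algHom_apply (Pi.evalAlgHom ℂ (fun _ : n => ℂ) i) d q
    simp only [Pi.evalAlgHom_apply] at h2
    rw [← h2]
    exact congrFun (Polynomial.coe_aeval_eq_eval (d i)) q
  rw [h, h3]

lemma ONB_mul_one {b : n → n → ℂ} (hb : ONB b) :
    (Matrix.of fun x i => b i x)ᴴ * (Matrix.of fun x i => b i x) = 1 := by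
  ext i j
  simpa [Matrix.mul_apply, Matrix.conjTranspose_apply, dotProduct,
    Matrix.one_apply] using hb i j

lemma mlog_sum_smul_proj {b : n → n → ℂ} (hb : ONB b) (c : n → ℝ) :
    mlog (∑ i, (c i : ℂ) • proj (b i)) = ∑ i, ((Real.log (c i) : ℂ)) • proj (b i) := by
  rcases isEmpty_or_nonempty n with h | h
  · ext x y; exact (IsEmpty.false x).elim
  set U : Matrix n n ℂ := Matrix.of fun x i => b i x with hUdef
  have hU1 : Uᴴ * U = 1 := ONB_mul_one hb
  have hU2 : U * Uᴴ = 1 := mul_eq_one_comm.mp hU1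
  have hform : ∀ d : n → ℝ,
      U * Matrix.diagonal (fun i => (d i : ℂ)) * Uᴴ = ∑ i, (d i : ℂ) • proj (b i) := by
    intro d
    ext x y
    rw [Matrix.sum_apply, Matrix.mul_apply]
    simp only [Matrix.mul_diagonal, Matrix.conjTranspose_apply, hUdef, Matrix.of_apply,
      Matrix.smul_apply, proj, vecMulVec_apply, Pi.star_apply, smul_eq_mul, Complex.star_def]
    exact Finset.sum_congr rfl fun i _ => by ring
  set A : Matrix n n ℂ := U * Matrix.diagonal (fun i => (c i : ℂ)) * Uᴴ with hAdef
  have hA : A.IsHermitian := by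
    apply Matrix.isHermitian_mul_mul_conjTranspose
    exact Matrix.isHermitian_diagonal_of_self_adjoint _
      (funext fun i => Complex.conj_ofReal _)
  set V : Matrix n n ℂ := (hA.eigenvectorUnitary : Matrix n n ℂ) with hVdef
  have hV2 : Vᴴ * V = 1 := by
    rw [hVdef, ← Matrix.star_eq_conjTranspose]
    exact Matrix.mem_unitaryGroup_iff'.mp hA.eigenvectorUnitary.2
  have hV1 : V * Vᴴ = 1 := mul_eq_one_comm.mp hV2
  have hspec : A = V * Matrix.diagonal (fun j => ((hA.eigenvalues j : ℝ) : ℂ)) * Vᴴ := by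
    rw [hVdef, ← Matrix.star_eq_conjTranspose]
    exact hA.spectral_theorem
  -- every eigenvalue of A is one of the `c i`
  have heig : ∀ j, ∃ i, hA.eigenvalues j = c i := by
    intro j
    set v : n → ℂ := fun x => V x j with hv
    have hAV : A * V = V * Matrix.diagonal (fun j => ((hA.eigenvalues j : ℝ) : ℂ)) := by
      conv_lhs => rw [hspec]
      rw [mul_assoc _ Vᴴ V, hV2, mul_one]
    have hvA : A *ᵥ v = ((hA.eigenvalues j : ℝ) : ℂ) • v := by
      funext x
      have hx := congrFun (congrFun hAV x) j
      rw [Matrix.mul_apply, Matrix.mul_diagonal] at hx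
      simpa [Matrix.mulVec, dotProduct, hv, mul_comm] using hx
    have hvne : v ≠ 0 := by
      intro h0
      have h1 := congrFun (congrFun hV2 j) j
      rw [Matrix.mul_apply] at h1
      simp only [Matrix.conjTranspose_apply] at h1
      have hz : (1 : Matrix n n ℂ) j j = 0 := by
        rw [← h1]
        refine Finset.sum_eq_zero fun x _ => ?_
        have hx0 : V x j = 0 := congrFun h0 x
        simp [hx0]
      simp [Matrix.one_apply] at hz
    set w : n → ℂ := Uᴴ *ᵥ v with hw
    have hDw : Matrix.diagonal (fun i => (c i : ℂ)) *ᵥ w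
        = ((hA.eigenvalues j : ℝ) : ℂ) • w := by
      have h1 : Matrix.diagonal (fun i => (c i : ℂ)) * Uᴴ = Uᴴ * A := by
        rw [hAdef, ← mul_assoc, ← mul_assoc, hU1, one_mul]
      rw [hw, Matrix.mulVec_mulVec, h1, ← Matrix.mulVec_mulVec, hvA, Matrix.mulVec_smul]
    have hwne : w ≠ 0 := by
      intro h0
      apply hvne
      have hUw : U *ᵥ w = v := by
        rw [hw, Matrix.mulVec_mulVec, hU2, Matrix.one_mulVec]
      rw [← hUw, h0, Matrix.mulVec_zero]
    obtain ⟨x, hx⟩ := Function.ne_iff.mp hwne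
    refine ⟨x, ?_⟩
    have h2 := congrFun hDw x
    rw [Matrix.mulVec_diagonal] at h2
    simp only [Pi.smul_apply, smul_eq_mul] at h2
    have h3 : (c x : ℂ) = ((hA.eigenvalues j : ℝ) : ℂ) := mul_right_cancel₀ hx h2
    exact (Complex.ofReal_inj.mp h3).symm
  -- interpolating polynomial
  set s : Finset ℝ := Finset.image c Finset.univ with hs
  set pp : Polynomial ℝ := Lagrange.interpolate s id Real.log with hppdef
  set q : Polynomial ℂ := pp.map (algebraMap ℝ ℂ) with hqdef
  have hqe : ∀ r ∈ s, q.eval ((r : ℝ) : ℂ) = ((Real.log r : ℝ) : ℂ) := by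
    intro r hr
    have h1 : Polynomial.eval r pp = Real.log r :=
      Lagrange.eval_interpolate_at_node Real.log Function.injective_id.injOn hr
    have h2 : ((r : ℝ) : ℂ) = algebraMap ℝ ℂ r := rfl
    rw [hqdef, h2, Polynomial.eval_map, Polynomial.eval₂_at_apply, h1]
    rfl
  have hmA : mlog A = Polynomial.aeval A q := by
    unfold mlog
    rw [dif_pos hA]
    have e1 : (fun i => ((Real.log (hA.eigenvalues i) : ℝ) : ℂ))
        = fun i => q.eval ((hA.eigenvalues i : ℝ) : ℂ) := by
      funext i
      obtain ⟨k, hk⟩ := heig i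
      rw [hk, hqe _ (Finset.mem_image_of_mem c (Finset.mem_univ k))]
    rw [Matrix.star_eq_conjTranspose, ← hVdef, e1, ← aeval_diagonal',
      ← aeval_conj V hV1 hV2, ← hspec]
  have hmB : Polynomial.aeval A q = ∑ i, ((Real.log (c i) : ℝ) : ℂ) • proj (b i) := by
    rw [hAdef, aeval_conj U hU2 hU1, aeval_diagonal']
    have e2 : (fun i => q.eval ((c i : ℝ) : ℂ)) = fun i => ((Real.log (c i) : ℝ) : ℂ) := by
      funext i
      exact hqe _ (Finset.mem_image_of_mem c (Finset.mem_univ i))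
    rw [e2, hform]
  calc mlog (∑ i, (c i : ℂ) • proj (b i)) = mlog A := by rw [hAdef, hform]
    _ = _ := hmA.trans hmB

end Aux2
section Aux3
variable {n : Type*} [Fintype n] [DecidableEq n]

lemma proj_mulVec (v w : n → ℂ) : proj v *ᵥ w = (star v ⬝ᵥ w) • v := by
  funext x
  simp only [proj, Matrix.mulVec, vecMulVec_apply, dotProduct, Pi.star_apply, Pi.smul_apply,
    smul_eq_mul, Finset.sum_mul]
  exact Finset.sum_congr rfl fun y _ => by ring

lemma sum_mulVec' {ι : Type*} (s : Finset ι) (f : ι → Matrix n n ℂ) (v : n → ℂ) :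
    (∑ i ∈ s, f i) *ᵥ v = ∑ i ∈ s, f i *ᵥ v := by
  funext x
  simp only [Matrix.mulVec, dotProduct, Matrix.sum_apply, Finset.sum_apply, Finset.sum_mul]
  exact Finset.sum_comm

lemma mulVec_sum' {ι : Type*} (M : Matrix n n ℂ) (s : Finset ι) (f : ι → n → ℂ) :
    M *ᵥ (∑ i ∈ s, f i) = ∑ i ∈ s, M *ᵥ f i := by
  funext x
  simp only [Matrix.mulVec, dotProduct, Finset.sum_apply, Finset.mul_sum]
  exact Finset.sum_comm

lemma sum_smul_proj_mulVec (b : n → n → ℂ) (a : n → ℂ) (v : n → ℂ) :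
    (∑ i, a i • proj (b i)) *ᵥ v = ∑ i, (a i * (star (b i) ⬝ᵥ v)) • b i := by
  rw [sum_mulVec']
  refine Finset.sum_congr rfl fun i _ => ?_
  rw [Matrix.smul_mulVec, proj_mulVec, smul_smul]

lemma dot_sum_smul {b : n → n → ℂ} (hb : ONB b) (a : n → ℂ) (j : n) :
    star (b j) ⬝ᵥ (∑ i, a i • b i) = a j := by
  calc star (b j) ⬝ᵥ (∑ i, a i • b i) = ∑ i, star (b j) ⬝ᵥ (a i • b i) := by
        simp only [dotProduct, Finset.sum_apply, Pi.smul_apply, smul_eq_mul, Finset.mul_sum]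
        exact Finset.sum_comm
    _ = ∑ i, a i * (star (b j) ⬝ᵥ b i) := Finset.sum_congr rfl fun i _ => by
        rw [dotProduct_smul]; rfl
    _ = a j := by
        simp only [hb j]
        simp [Finset.sum_ite_eq]
  
lemma coef_of_sum {b : n → n → ℂ} (hb : ONB b) (a : n → ℂ) (j : n) :
    star (b j) ⬝ᵥ (∑ i, a i • proj (b i)) *ᵥ b j = a j := by
  rw [sum_smul_proj_mulVec, dot_sum_smul hb]
  rw [hb j j]
  simp

lemma sum_smul_proj_mulVec_basis {b : n → n → ℂ} (hb : ONB b) (a : n → ℂ) (j : n) :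
    (∑ i, a i • proj (b i)) *ᵥ b j = a j • b j := by
  rw [sum_smul_proj_mulVec]
  rw [Finset.sum_eq_single j]
  · rw [hb j j]; simp
  · intro i _ hij
    rw [hb i j, if_neg hij]
    simp
  · intro h; exact absurd (Finset.mem_univ j) h

lemma trace_sum_smul_proj {b : n → n → ℂ} (hb : ONB b) (d : n → ℂ) :
    (∑ i, d i • proj (b i)).trace = ∑ i, d i := by
  rw [Matrix.trace_sum]
  refine Finset.sum_congr rfl fun i _ => ?_
  rw [Matrix.trace_smul, smul_eq_mul]
  have h1 := trace_mul_proj (1 : Matrix n n ℂ) (b i)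
  rw [Matrix.one_mul, Matrix.one_mulVec] at h1
  rw [h1, hb i i]
  simp

lemma trace_mul_sum_smul_proj (b : n → n → ℂ) (M : Matrix n n ℂ) (d : n → ℂ) :
    (M * ∑ i, d i • proj (b i)).trace = ∑ i, d i * (star (b i) ⬝ᵥ M *ᵥ b i) := by
  rw [Finset.mul_sum, Matrix.trace_sum]
  refine Finset.sum_congr rfl fun i _ => ?_
  rw [Matrix.mul_smul, Matrix.trace_smul, trace_mul_proj, smul_eq_mul]

lemma trace_dephase {b : n → n → ℂ} (hb : ONB b) (M : Matrix n n ℂ) :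
    (dephase b M).trace = M.trace := by
  rw [dephase_eq, Matrix.trace_sum]
  have h : ∀ i, ((star (b i) ⬝ᵥ M *ᵥ b i) • proj (b i)).trace = (M * proj (b i)).trace := by
    intro i
    rw [Matrix.trace_smul, trace_mul_proj, smul_eq_mul]
    have h2 := trace_mul_proj (1 : Matrix n n ℂ) (b i)
    rw [Matrix.one_mul, Matrix.one_mulVec] at h2
    rw [h2, hb i i]
    simp
  rw [Finset.sum_congr rfl fun i _ => h i, ← Matrix.trace_sum, ← Finset.mul_sum, sum_proj hb,
    Matrix.mul_one]

lemma proj_posSemidef (v : n → ℂ) : (proj v).PosSemidef := by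
  have h : proj v = Matrix.replicateCol Unit v * (Matrix.replicateCol Unit v)ᴴ := by
    rw [Matrix.conjTranspose_replicateCol, ← Matrix.vecMulVec_eq]
    rfl
  rw [h]
  exact Matrix.posSemidef_self_mul_conjTranspose _

lemma psd_smul_real {M : Matrix n n ℂ} (hM : M.PosSemidef) {r : ℝ} (hr : 0 ≤ r) :
    ((r : ℂ) • M).PosSemidef := by
  rw [Matrix.posSemidef_iff_dotProduct_mulVec]
  constructor
  · unfold Matrix.IsHermitian
    rw [Matrix.conjTranspose_smul, hM.1.eq, Complex.star_def, Complex.conj_ofReal]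
  · intro x
    rw [Matrix.smul_mulVec, dotProduct_smul, smul_eq_mul]
    exact mul_nonneg (by exact_mod_cast hr) (hM.dotProduct_mulVec_nonneg x)

lemma psd_sum_smul_proj (b : n → n → ℂ) (d : n → ℝ) (hd : ∀ i, 0 ≤ d i) :
    (∑ i, (d i : ℂ) • proj (b i)).PosSemidef := by
  refine Finset.sum_induction _ _ (fun x y hx hy => hx.add hy) Matrix.PosSemidef.zero ?_
  exact fun i _ => psd_smul_real (proj_posSemidef (b i)) (hd i)

lemma re_sum_real {ι : Type*} (s : Finset ι) (f : ι → ℝ) :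
    (∑ i ∈ s, ((f i : ℝ) : ℂ)).re = ∑ i ∈ s, f i := by
  rw [← Complex.ofReal_sum, Complex.ofReal_re]

lemma gibbs_term {p q : ℝ} (hp : 0 ≤ p) (hq : 0 ≤ q) (h : q = 0 → p = 0) :
    p * Real.log q - p * Real.log p ≤ q - p := by
  rcases hp.eq_or_lt with h0 | h0
  · rw [← h0]; simpa using hq
  · have hq0 : 0 < q := by
      rcases hq.eq_or_lt with h1 | h1
      · exact absurd (h h1.symm) (ne_of_gt h0)
      · exact h1
    have hlog := Real.log_le_sub_one_of_pos (div_pos hq0 h0)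
    rw [Real.log_div (ne_of_gt hq0) (ne_of_gt h0)] at hlog
    have h2 : p * (q / p) = q := by field_simp
    nlinarith [mul_le_mul_of_nonneg_left hlog (le_of_lt h0)]

end Aux3
/-- the relative entropy of coherence equals the minimum relative entropy
to the set of incoherent (diagonal) states, and equals `S(Λ^Ξ(ρ)) − S(ρ)`. -/
theorem relEnt_coherence_eq_entropy_difference
    (ρ : Matrix n n ℂ) (hρ : IsDensity ρ) (b : n → n → ℂ) (hb : ONB b) :
    IsLeast {x : EReal | ∃ σ : Matrix n n ℂ, IsDensity σ ∧ dephase b σ = σ ∧ x = relEnt ρ σ}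
      ((vN (dephase b ρ) - vN ρ : ℝ) : EReal) := by
  obtain ⟨hpsd, htr⟩ := hρ
  set p : n → ℝ := fun i => (star (b i) ⬝ᵥ ρ *ᵥ b i).re with hpdef
  have hcoef : ∀ i, ((p i : ℝ) : ℂ) = star (b i) ⬝ᵥ ρ *ᵥ b i := fun i =>
    herm_coeff_real hpsd.1 (b i)
  have hpnn : ∀ i, 0 ≤ p i := fun i => (Complex.nonneg_iff.mp (hpsd.dotProduct_mulVec_nonneg (b i))).1
  set Δ : Matrix n n ℂ := dephase b ρ with hΔdef
  have hform : Δ = ∑ i, (p i : ℂ) • proj (b i) := by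
    rw [hΔdef, dephase_eq]
    exact Finset.sum_congr rfl fun i _ => by rw [← hcoef]
  have hdcoef : ∀ i, ((p i : ℝ) : ℂ) = star (b i) ⬝ᵥ Δ *ᵥ b i := by
    intro i
    rw [hform, coef_of_sum hb]
  have hlogΔ : mlog Δ = ∑ i, ((Real.log (p i) : ℝ) : ℂ) • proj (b i) := by
    rw [hform]
    exact mlog_sum_smul_proj hb p
  -- generic trace computation
  have hTrgen : ∀ (M : Matrix n n ℂ) (cM : n → ℝ),
      (∀ i, ((cM i : ℝ) : ℂ) = star (b i) ⬝ᵥ M *ᵥ b i) → ∀ d : n → ℝ,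
      (M * ∑ i, ((d i : ℝ) : ℂ) • proj (b i)).trace.re = ∑ i, d i * cM i := by
    intro M cM hc d
    rw [trace_mul_sum_smul_proj]
    have he : ∀ i, ((d i : ℝ) : ℂ) * (star (b i) ⬝ᵥ M *ᵥ b i) = (((d i * cM i : ℝ)) : ℂ) := by
      intro i
      rw [← hc i]
      push_cast
      ring
    rw [Finset.sum_congr rfl fun i _ => he i, re_sum_real]
  have hTr2 : (ρ * mlog Δ).trace.re = ∑ i, Real.log (p i) * p i := by
    rw [hlogΔ]
    exact hTrgen ρ p hcoef (fun i => Real.log (p i))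
  have hTr1 : (Δ * mlog Δ).trace.re = ∑ i, Real.log (p i) * p i := by
    rw [hlogΔ]
    exact hTrgen Δ p hdcoef (fun i => Real.log (p i))
  have hvNΔ : vN Δ = -∑ i, Real.log (p i) * p i := by
    rw [vN, hTr1]
  have hΔtr : Δ.trace = 1 := by rw [hΔdef, trace_dephase hb, htr]
  have hΔdens : IsDensity Δ := by
    refine ⟨?_, hΔtr⟩
    rw [hform]
    exact psd_sum_smul_proj b p hpnn
  have hΔfix : dephase b Δ = Δ := by
    conv_lhs => rw [hform]
    rw [dephase_eq, hform]
    refine Finset.sum_congr rfl fun j _ => ?_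
    rw [coef_of_sum hb]
  have hsum1 : ∀ (M : Matrix n n ℂ) (d : n → ℝ), M.trace = 1 →
      M = ∑ i, (d i : ℂ) • proj (b i) → ∑ i, d i = 1 := by
    intro M d h1 h2
    have h3 : (∑ i, ((d i : ℝ) : ℂ)) = 1 := by rw [← trace_sum_smul_proj hb, ← h2, h1]
    exact_mod_cast h3
  have hsp : ∑ i, p i = 1 := hsum1 Δ p hΔtr hform
  have hzero : ∀ i, p i = 0 → ρ *ᵥ b i = 0 := by
    intro i h0
    apply (hpsd.dotProduct_mulVec_zero_iff (b i)).mp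
    rw [← hcoef i, h0]
    simp
  have hsupp : ∀ v, Δ *ᵥ v = 0 → ρ *ᵥ v = 0 := by
    intro v hv
    have hv' : ∀ j, (p j : ℂ) * (star (b j) ⬝ᵥ v) = 0 := by
      intro j
      rw [hform, sum_smul_proj_mulVec] at hv
      have := congrArg (fun w => star (b j) ⬝ᵥ w) hv
      simpa [dot_sum_smul hb] using this
    have hvexp : v = ∑ i, (star (b i) ⬝ᵥ v) • b i := by
      have h2 : (∑ i, proj (b i)) *ᵥ v = ∑ i, (star (b i) ⬝ᵥ v) • b i := by
        rw [sum_mulVec']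
        exact Finset.sum_congr rfl fun i _ => proj_mulVec _ _
      rw [← h2, sum_proj hb, Matrix.one_mulVec]
    calc ρ *ᵥ v = ρ *ᵥ ∑ i, (star (b i) ⬝ᵥ v) • b i := by rw [← hvexp]
      _ = ∑ i, (star (b i) ⬝ᵥ v) • (ρ *ᵥ b i) := by
          rw [mulVec_sum']
          exact Finset.sum_congr rfl fun i _ => Matrix.mulVec_smul ρ _ _
      _ = 0 := by
          refine Finset.sum_eq_zero fun i _ => ?_
          rcases eq_or_ne (p i) 0 with h0 | h0
          · rw [hzero i h0, smul_zero]
          · have hdv : star (b i) ⬝ᵥ v = 0 := by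
              rcases mul_eq_zero.mp (hv' i) with h | h
              · exact absurd (Complex.ofReal_eq_zero.mp h) h0
              · exact h
            rw [hdv, zero_smul]
  have hrel : relEnt ρ Δ = ((vN Δ - vN ρ : ℝ) : EReal) := by
    unfold relEnt
    rw [if_pos hsupp]
    apply congrArg Real.toEReal
    rw [mul_sub, Matrix.trace_sub, Complex.sub_re, hTr2, hvNΔ, vN]
    ring
  constructor
  · exact ⟨Δ, hΔdens, hΔfix, hrel.symm⟩
  · rintro x ⟨σ, ⟨hσpsd, hσtr⟩, hσfix, rfl⟩
    by_cases hs : ∀ v, σ *ᵥ v = 0 → ρ *ᵥ v = 0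
    · set q : n → ℝ := fun i => (star (b i) ⬝ᵥ σ *ᵥ b i).re with hqdef
      have hqcoef : ∀ i, ((q i : ℝ) : ℂ) = star (b i) ⬝ᵥ σ *ᵥ b i := fun i =>
        herm_coeff_real hσpsd.1 (b i)
      have hqnn : ∀ i, 0 ≤ q i := fun i => (Complex.nonneg_iff.mp (hσpsd.dotProduct_mulVec_nonneg (b i))).1
      have hσform : σ = ∑ i, (q i : ℂ) • proj (b i) := by
        conv_lhs => rw [← hσfix]
        rw [dephase_eq]
        exact Finset.sum_congr rfl fun i _ => by rw [← hqcoef]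
      have hσq0 : ∀ i, q i = 0 → p i = 0 := by
        intro i h0
        have hσb : σ *ᵥ b i = 0 := by
          rw [hσform, sum_smul_proj_mulVec_basis hb]
          rw [show (q i : ℂ) = 0 by exact_mod_cast h0]
          simp
        have hρb : ρ *ᵥ b i = 0 := hs _ hσb
        show (star (b i) ⬝ᵥ ρ *ᵥ b i).re = 0
        rw [hρb]
        simp
      have hlogσ : mlog σ = ∑ i, ((Real.log (q i) : ℝ) : ℂ) • proj (b i) := by
        conv_lhs => rw [hσform]
        exact mlog_sum_smul_proj hb q
      have hTrσ : (ρ * mlog σ).trace.re = ∑ i, Real.log (q i) * p i := by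
        rw [hlogσ]
        exact hTrgen ρ p hcoef (fun i => Real.log (q i))
      have hsq : ∑ i, q i = 1 := hsum1 σ q hσtr hσform
      unfold relEnt
      rw [if_pos hs]
      apply EReal.coe_le_coe_iff.mpr
      rw [mul_sub, Matrix.trace_sub, Complex.sub_re, hTrσ, hvNΔ, vN]
      have key : ∑ i, (p i * Real.log (q i) - p i * Real.log (p i)) ≤ 0 := by
        calc ∑ i, (p i * Real.log (q i) - p i * Real.log (p i))
            ≤ ∑ i, (q i - p i) := Finset.sum_le_sum fun i _ =>
              gibbs_term (hpnn i) (hqnn i) (hσq0 i)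
          _ = 0 := by rw [Finset.sum_sub_distrib, hsq, hsp]; ring
      rw [Finset.sum_sub_distrib] at key
      have e1 : ∑ i, Real.log (q i) * p i = ∑ i, p i * Real.log (q i) :=
        Finset.sum_congr rfl fun i _ => mul_comm _ _
      have e2 : ∑ i, Real.log (p i) * p i = ∑ i, p i * Real.log (p i) :=
        Finset.sum_congr rfl fun i _ => mul_comm _ _
      rw [e1, e2]
      linarith
    · unfold relEnt
      rw [if_neg hs]
      exact le_top

end
end

section
/- Every pure bipartite state |Ψ⟩ = Σ_j λ_j |jj⟩ in Schmidt form is a maximally correlated state, and for it the steering-induced coherence equals the entropy of entanglement: Alice's Fourier-basis measurement steers Bob to pure states |φ_k⟩ = Σ_j e^{2πikj/d} λ_j |j⟩ whose relative-entropy coherence in the computational basis equals S(ρ_B) = −Σ_j |λ_j|^2 log |λ_j|^2 for every outcome k. -/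
open Matrix Kronecker BigOperators Finset
open scoped Classical ComplexOrder

noncomputable section

variable {m n q : Type*} [Fintype m] [DecidableEq m] [Fintype n] [DecidableEq n]
  [Fintype q] [DecidableEq q]

section Aux
open Polynomial
variable {N : Type*} [Fintype N] [DecidableEq N]

lemma trace_mul_mlog (A : Matrix N N ℂ) (hA : A.IsHermitian) :
    (A * mlog A).trace = ∑ i, (hA.eigenvalues i : ℂ) * Real.log (hA.eigenvalues i) := by
  set U : Matrix N N ℂ := (hA.eigenvectorUnitary : Matrix N N ℂ) with hUdef
  have hU : star U * U = 1 := (Matrix.mem_unitaryGroup_iff').mp hA.eigenvectorUnitary.2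
  have h1 : mlog A = U * diagonal (fun i => (Real.log (hA.eigenvalues i) : ℂ)) * star U := by
    rw [mlog, dif_pos hA]
  have h2 : A = U * diagonal (RCLike.ofReal ∘ hA.eigenvalues) * star U := hA.spectral_theorem
  rw [h1]
  rw [show A * (U * diagonal (fun i => (Real.log (hA.eigenvalues i) : ℂ)) * star U) =
      U * diagonal (RCLike.ofReal ∘ hA.eigenvalues) * star U *
      (U * diagonal (fun i => (Real.log (hA.eigenvalues i) : ℂ)) * star U) from by rw [← h2]]
  have key : U * diagonal (RCLike.ofReal ∘ hA.eigenvalues) * star U *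
      (U * diagonal (fun i => (Real.log (hA.eigenvalues i) : ℂ)) * star U) =
      U * (diagonal (RCLike.ofReal ∘ hA.eigenvalues) *
        diagonal (fun i => (Real.log (hA.eigenvalues i) : ℂ))) * star U := by
    rw [show U * diagonal (RCLike.ofReal ∘ hA.eigenvalues) * star U *
      (U * diagonal (fun i => (Real.log (hA.eigenvalues i) : ℂ)) * star U) =
      U * (diagonal (RCLike.ofReal ∘ hA.eigenvalues) * ((star U * U) *
      diagonal (fun i => (Real.log (hA.eigenvalues i) : ℂ)))) * star U by
        simp only [Matrix.mul_assoc], hU, Matrix.one_mul]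
  rw [key, Matrix.trace_mul_cycle, ← Matrix.mul_assoc, hU, Matrix.one_mul,
    diagonal_mul_diagonal, trace_diagonal]
  rfl

lemma eig_sum_diagonal (p : N → ℝ) (f : ℝ → ℝ)
    (hA : (Matrix.diagonal (fun i => (p i : ℂ))).IsHermitian) :
    ∑ i, f (hA.eigenvalues i) = ∑ i, f (p i) := by
  have hdet : ∀ x : ℂ, ∏ i, (x - (hA.eigenvalues i : ℂ)) = ∏ i, (x - (p i : ℂ)) := by
    intro x
    have h2 : Matrix.diagonal (fun i => (p i : ℂ)) = (hA.eigenvectorUnitary : Matrix N N ℂ) *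
        diagonal (RCLike.ofReal ∘ hA.eigenvalues) * star (hA.eigenvectorUnitary : Matrix N N ℂ) :=
      hA.spectral_theorem
    set U : Matrix N N ℂ := (hA.eigenvectorUnitary : Matrix N N ℂ)
    have hU : star U * U = 1 := (Matrix.mem_unitaryGroup_iff').mp hA.eigenvectorUnitary.2
    have hU' : U * star U = 1 := (Matrix.mem_unitaryGroup_iff).mp hA.eigenvectorUnitary.2
    have hsplit : x • (1 : Matrix N N ℂ) - Matrix.diagonal (fun i => (p i : ℂ)) =
        U * (x • 1 - diagonal (RCLike.ofReal ∘ hA.eigenvalues)) * star U := by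
      rw [Matrix.mul_sub, Matrix.sub_mul, ← h2, mul_smul_comm, mul_one, smul_mul_assoc, hU']
    have hd := congrArg Matrix.det hsplit
    rw [Matrix.det_mul_right_comm, hU', Matrix.one_mul] at hd
    simp only [smul_one_eq_diagonal, Matrix.diagonal_sub, Matrix.det_diagonal, Function.comp,
      Pi.sub_apply, RCLike.ofReal_real_eq_id, id] at hd
    exact hd.symm
  have hpoly : ((Finset.univ.val.map (fun i => (hA.eigenvalues i : ℂ))).map
      (fun a => X - C a)).prod = ((Finset.univ.val.map (fun i => (p i : ℂ))).map
      (fun a => X - C a)).prod := by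
    apply Polynomial.funext
    intro x
    simp only [Polynomial.eval_multiset_prod, Multiset.map_map, Function.comp,
      Polynomial.eval_sub, Polynomial.eval_X, Polynomial.eval_C]
    exact hdet x
  have hroots := congrArg Polynomial.roots hpoly
  rw [Polynomial.roots_multiset_prod_X_sub_C, Polynomial.roots_multiset_prod_X_sub_C] at hroots
  have key : (Finset.univ.val.map hA.eigenvalues) = Finset.univ.val.map p := by
    apply Multiset.map_injective Complex.ofReal_injective
    simpa [Multiset.map_map, Function.comp] using hroots
  calc ∑ i, f (hA.eigenvalues i) = ((Finset.univ.val.map hA.eigenvalues).map f).sum := by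
        rw [Multiset.map_map]; rfl
    _ = ((Finset.univ.val.map p).map f).sum := by rw [key]
    _ = ∑ i, f (p i) := by rw [Multiset.map_map]; rfl

lemma vN_diagonal (p : N → ℝ) :
    vN (Matrix.diagonal (fun i => (p i : ℂ))) = -∑ i, p i * Real.log (p i) := by
  have hA : (Matrix.diagonal (fun i => (p i : ℂ))).IsHermitian :=
    Matrix.isHermitian_diagonal_of_self_adjoint _ (by
      funext i; exact Complex.conj_ofReal _)
  rw [vN, trace_mul_mlog _ hA]
  have : (∑ i, (hA.eigenvalues i : ℂ) * Real.log (hA.eigenvalues i)).re =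
      ∑ i, hA.eigenvalues i * Real.log (hA.eigenvalues i) := by simp
  rw [this, eig_sum_diagonal p (fun x => x * Real.log x) hA]

end Aux

/-- a pure state in Schmidt form `|Ψ⟩ = Σ λ_j|jj⟩` is maximally correlated;
Alice's Fourier measurement steers Bob to the pure states `|φ_k⟩ = Σ e^{2πikj/d} λ_j |j⟩`,
whose coherence equals the entropy of entanglement `−Σ λ_j² log λ_j²` for every `k`. -/
theorem pure_schmidt_steering
    (d : ℕ) (hd : 0 < d) (lam : Fin d → ℝ)
    (hlam : ∀ j, 0 ≤ lam j) (hsum : ∑ j, (lam j) ^ 2 = 1) :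
    let ψ : Fin d × Fin d → ℂ := fun p => if p.1 = p.2 then (lam p.1 : ℂ) else 0
    let φ : Fin d → Fin d → ℂ := fun k j =>
      Complex.exp (2 * Real.pi * Complex.I * (k : ℕ) * (j : ℕ) / d) * (lam j : ℂ)
    (∀ i j k l, (proj ψ) (i, j) (k, l) =
      if i = j ∧ k = l then (proj ψ) (i, i) (k, k) else 0) ∧
    (∀ k : Fin d,
      (d : ℂ) • steer (fbasis d k) (proj ψ) = proj (φ k) ∧
      vN (dephase stdB (proj (φ k))) = -∑ j, (lam j) ^ 2 * Real.log ((lam j) ^ 2)) ∧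
    vN (ptraceA (proj ψ)) = -∑ j, (lam j) ^ 2 * Real.log ((lam j) ^ 2) := by
  intro ψ φ
  have hψ : ∀ p : Fin d × Fin d, ψ p = if p.1 = p.2 then (lam p.1 : ℂ) else 0 := fun p => rfl
  have hφ : ∀ k j : Fin d, φ k j =
      Complex.exp (2 * Real.pi * Complex.I * (k : ℕ) * (j : ℕ) / d) * (lam j : ℂ) :=
    fun k j => rfl
  have hdC : (d : ℂ) ≠ 0 := Nat.cast_ne_zero.mpr hd.ne'
  have hsq : ((Real.sqrt d : ℝ) : ℂ) * ((Real.sqrt d : ℝ) : ℂ) = (d : ℂ) := by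
    rw [← Complex.ofReal_mul, Real.mul_self_sqrt (Nat.cast_nonneg d)]; norm_cast
  have hE : ∀ k a : Fin d, (starRingEnd ℂ)
      (Complex.exp (-(2 * Real.pi * Complex.I * (k : ℕ) * (a : ℕ)) / d)) =
      Complex.exp (2 * Real.pi * Complex.I * (k : ℕ) * (a : ℕ) / d) := by
    intro k a
    rw [← Complex.exp_conj]
    congr 1
    simp [map_div₀, _root_.map_mul, map_ofNat, map_natCast, Complex.conj_ofReal, Complex.conj_I]
  have hE2 : ∀ k a : Fin d, (starRingEnd ℂ)
      (Complex.exp (2 * Real.pi * Complex.I * (k : ℕ) * (a : ℕ) / d)) =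
      Complex.exp (-(2 * Real.pi * Complex.I * (k : ℕ) * (a : ℕ)) / d) := by
    intro k a
    rw [← Complex.exp_conj]
    congr 1
    simp [map_div₀, _root_.map_mul, map_ofNat, map_natCast, Complex.conj_ofReal, Complex.conj_I]
  have hcancel : ∀ k a : Fin d,
      Complex.exp (2 * Real.pi * Complex.I * (k : ℕ) * (a : ℕ) / d)
      * Complex.exp (-(2 * Real.pi * Complex.I * (k : ℕ) * (a : ℕ)) / d) = 1 := by
    intro k a
    rw [← Complex.exp_add, show (2 * Real.pi * Complex.I * (k : ℕ) * (a : ℕ) / d) +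
      (-(2 * Real.pi * Complex.I * (k : ℕ) * (a : ℕ)) / d) = 0 by ring, Complex.exp_zero]
  refine ⟨?_, ?_, ?_⟩
  · intro i j k l
    by_cases h1 : i = j <;> by_cases h2 : k = l <;>
      simp [proj, vecMulVec, hψ, h1, h2]
  · intro k
    constructor
    · ext j j'
      simp only [Matrix.smul_apply, smul_eq_mul, steer, Matrix.of_apply, proj, vecMulVec,
        Pi.star_apply, RCLike.star_def, hψ, hφ, mul_ite, ite_mul, zero_mul, mul_zero, map_zero,
        apply_ite (starRingEnd ℂ), Complex.conj_ofReal, Finset.sum_ite_eq', Finset.mem_univ,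
        if_true]
      simp only [fbasis, Complex.ofReal_div, Complex.ofReal_one, map_div₀, _root_.map_one,
        _root_.map_mul, hE, hE2, Complex.conj_ofReal]
      have hs0 : ((Real.sqrt d : ℝ) : ℂ) ≠ 0 := by
        rw [Ne, Complex.ofReal_eq_zero]
        positivity
      have hss : (d : ℂ) * ((((Real.sqrt d : ℝ) : ℂ))⁻¹ * (((Real.sqrt d : ℝ) : ℂ))⁻¹) = 1 := by
        field_simp
        rw [sq]
        exact hsq.symm
      linear_combination (Complex.exp (2 * Real.pi * Complex.I * (k : ℕ) * (j : ℕ) / d) *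
        Complex.exp (-(2 * Real.pi * Complex.I * (k : ℕ) * (j' : ℕ)) / d) *
        (lam j : ℂ) * (lam j' : ℂ)) * hss
    · have hdep : dephase stdB (proj (φ k)) =
          Matrix.diagonal (fun i => ((lam i ^ 2 : ℝ) : ℂ)) := by
        ext a b
        simp only [dephase, Matrix.sum_apply, proj, stdB, vecMulVec, Matrix.mul_apply,
          Matrix.of_apply, Pi.star_apply, RCLike.star_def, hφ, mul_ite,
          ite_mul, zero_mul, mul_zero, one_mul, mul_one, apply_ite (starRingEnd ℂ), map_zero,
          _root_.map_one, Complex.conj_ofReal, _root_.map_mul, hE2, Finset.sum_ite_eq,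
          Finset.sum_ite_eq', Finset.mem_univ, if_true, Matrix.diagonal_apply]
        rcases eq_or_ne a b with rfl | h
        · rw [if_pos rfl,
            Finset.sum_eq_single a (fun x _ hx => Finset.sum_eq_zero fun y _ => by
              simp [if_neg hx]) (by simp),
            Finset.sum_eq_single a (fun y _ hy => by
              simp [show ¬ a = y from fun h' => hy h'.symm]) (by simp)]
          simp only [if_pos rfl]
          push_cast
          linear_combination ((lam a : ℂ) * (lam a : ℂ)) * hcancel k a
        · rw [if_neg h]
          refine Finset.sum_eq_zero fun x _ => Finset.sum_eq_zero fun y _ => ?_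
          by_cases h1 : x = b <;> by_cases h2 : x = y <;> by_cases h3 : x = a <;> simp_all
      rw [hdep, vN_diagonal (fun i => lam i ^ 2)]
  · have hpt : ptraceA (proj ψ) = Matrix.diagonal (fun i => ((lam i ^ 2 : ℝ) : ℂ)) := by
      ext a b
      simp [ptraceA, proj, vecMulVec, hψ, Matrix.diagonal, apply_ite (starRingEnd ℂ), map_zero,
        mul_ite, ite_mul, zero_mul, mul_zero, Complex.conj_ofReal, Finset.sum_ite_eq,
        Finset.sum_ite_eq']
      rcases eq_or_ne a b with rfl | h
      · simp [sq]
      · simp [h, Ne.symm h]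
    rw [hpt, vN_diagonal (fun i => lam i ^ 2)]


end
end
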